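/- Let q, r_0,…,r_N, r_{00},…,r_{(m−1)N}, g_0,…,g_{m−1} be finitely supported real-valued coefficient families (i.e., families p with p_{lk} = conj(p_{kl}), so that p(z,z̄) ∈ ℝ for all z) such that q = Σ_{j=0}^N r_j·r_j + Σ_{i=0}^{m−1} (Σ_{j=0}^N r_{ij}·r_{ij})·g_i as an identity of coefficient families (products meaning convolution). Then there exists a constant C ≥ 0, depending only on the r_j, r_{ij}, g_i, such that for every unital C*-algebra A, every δ ≥ 0, and every a ∈ A with ‖a‖ ≤ 1, ‖a a* − a* a‖ ≤ δ, and g_i(a,a*) ≥ 0 for i = 0,…,m−1, one has q(a,a*) ≥ −C·δ·1 in the order of self-adjoint elements of A. -/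

import Mathlib

open scoped ComplexConjugate

/-- Evaluation of a finitely supported coefficient family `p = (p_{kl})` at an element `a`
of a star `ℂ`-algebra: `p(a,a*) = ∑ p_{kl} a^k (a*)^l`. -/
noncomputable def polyEvalA {A : Type*} [Ring A] [StarRing A] [Algebra ℂ A]
    (p : (ℕ × ℕ) →₀ ℂ) (a : A) : A :=
  p.sum fun kl c => c • (a ^ kl.1 * star a ^ kl.2)

/-- Convolution of coefficient families, corresponding to the product of the associated
polynomial functions `∑ p_{kl} z^k conj(z)^l`. -/
noncomputable def polyConv (p q : (ℕ × ℕ) →₀ ℂ) : (ℕ × ℕ) →₀ ℂ :=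
  p.sum fun kl c => q.sum fun st d => Finsupp.single (kl.1 + st.1, kl.2 + st.2) (c * d)

/-- A coefficient family is real-valued iff `p_{lk} = conj (p_{kl})`, i.e. the associated
function `∑ p_{kl} z^k conj(z)^l` takes real values. -/
def IsRealFam (p : (ℕ × ℕ) →₀ ℂ) : Prop :=
  ∀ k l : ℕ, p (l, k) = conj (p (k, l))

section evalL
variable {A : Type*} [Ring A] [StarRing A] [Algebra ℂ A]

noncomputable def polyEvalL (a : A) : ((ℕ × ℕ) →₀ ℂ) →ₗ[ℂ] A :=
  Finsupp.lsum ℂ fun kl => LinearMap.toSpanSingleton ℂ A (a ^ kl.1 * star a ^ kl.2)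

lemma polyEvalA_eq (p : (ℕ × ℕ) →₀ ℂ) (a : A) : polyEvalA p a = polyEvalL a p := rfl

lemma polyEvalL_single (a : A) (kl : ℕ × ℕ) (c : ℂ) :
    polyEvalL a (Finsupp.single kl c) = c • (a ^ kl.1 * star a ^ kl.2) := by
  simp [polyEvalL, LinearMap.toSpanSingleton_apply]

lemma polyEvalA_apply (p : (ℕ × ℕ) →₀ ℂ) (a : A) :
    polyEvalA p a = ∑ kl ∈ p.support, p kl • (a ^ kl.1 * star a ^ kl.2) := rfl

lemma polyConv_apply (p q : (ℕ × ℕ) →₀ ℂ) :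
    polyConv p q = ∑ kl ∈ p.support, ∑ st ∈ q.support,
      Finsupp.single (kl.1 + st.1, kl.2 + st.2) (p kl * q st) := rfl

lemma polyEvalA_conv (p q : (ℕ × ℕ) →₀ ℂ) (a : A) :
    polyEvalA (polyConv p q) a = ∑ kl ∈ p.support, ∑ st ∈ q.support,
      (p kl * q st) • (a ^ (kl.1 + st.1) * star a ^ (kl.2 + st.2)) := by
  rw [polyEvalA_eq, polyConv_apply, map_sum]
  refine Finset.sum_congr rfl fun kl _ => ?_
  rw [map_sum]
  exact Finset.sum_congr rfl fun st _ => polyEvalL_single a _ _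

lemma polyEvalA_mul (p q : (ℕ × ℕ) →₀ ℂ) (a : A) :
    polyEvalA p a * polyEvalA q a = ∑ kl ∈ p.support, ∑ st ∈ q.support,
      (p kl * q st) • (a ^ kl.1 * star a ^ kl.2 * (a ^ st.1 * star a ^ st.2)) := by
  rw [polyEvalA_apply, polyEvalA_apply, Finset.sum_mul_sum]
  refine Finset.sum_congr rfl fun kl _ => Finset.sum_congr rfl fun st _ => ?_
  rw [smul_mul_smul_comm]

lemma polyEvalA_sum {ι : Type*} (s : Finset ι) (f : ι → (ℕ × ℕ) →₀ ℂ) (a : A) :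
    polyEvalA (∑ i ∈ s, f i) a = ∑ i ∈ s, polyEvalA (f i) a := by
  simp only [polyEvalA_eq, map_sum]

end evalL

section selfadj
variable {A : Type*} [CStarAlgebra A]

lemma isSelfAdjoint_polyEvalA {p : (ℕ × ℕ) →₀ ℂ} (hp : IsRealFam p) (a : A) :
    IsSelfAdjoint (polyEvalA p a) := by
  rw [IsSelfAdjoint, polyEvalA_apply, star_sum]
  rw [show (∑ kl ∈ p.support, p kl • (a ^ kl.1 * star a ^ kl.2)) =
      ∑ kl ∈ p.support, p kl.swap • (a ^ kl.2 * star a ^ kl.1) from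
    Finset.sum_nbij' (fun kl => kl.swap) (fun kl => kl.swap)
      (fun kl hkl => by
        simp only [Finsupp.mem_support_iff] at hkl ⊢
        rw [show (kl.swap : ℕ × ℕ) = (kl.2, kl.1) from rfl, hp kl.1 kl.2]
        · simpa using hkl
        )
      (fun kl hkl => by
        simp only [Finsupp.mem_support_iff] at hkl ⊢
        rw [show (kl.swap : ℕ × ℕ) = (kl.2, kl.1) from rfl, hp kl.1 kl.2]
        simpa using hkl)
      (fun kl _ => Prod.swap_swap kl) (fun kl _ => Prod.swap_swap kl)
      (fun kl _ => by simp)]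
  refine Finset.sum_congr rfl fun kl _ => ?_
  rw [star_smul, star_mul, star_pow, star_pow, star_star]
  rw [show p kl.swap = conj (p kl) from by
    rw [show (kl.swap : ℕ × ℕ) = (kl.2, kl.1) from rfl]
    exact hp kl.1 kl.2]
  simp [Complex.star_def]

end selfadj

section comms
variable {A : Type*} [CStarAlgebra A] {a : A} {δ : ℝ}

lemma pow_norm_le_one (ha : ‖a‖ ≤ 1) (n : ℕ) : ‖a ^ n‖ ≤ 1 := by
  induction n with
  | zero =>
    rcases subsingleton_or_nontrivial A with h | h
    · simp [Subsingleton.elim ((a : A) ^ 0) 0, Subsingleton.elim (1 : A) 0]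
    · simpa using le_of_eq (norm_one (α := A))
  | succ n ih =>
    rw [pow_succ]
    calc ‖a ^ n * a‖ ≤ ‖a ^ n‖ * ‖a‖ := norm_mul_le _ _
      _ ≤ 1 * 1 := mul_le_mul ih ha (norm_nonneg _) zero_le_one
      _ = 1 := one_mul 1

lemma star_comm_pow (ha : ‖a‖ ≤ 1) (hc : ‖a * star a - star a * a‖ ≤ δ) (s : ℕ) :
    ‖star a * a ^ s - a ^ s * star a‖ ≤ s * δ := by
  have hδ : 0 ≤ δ := le_trans (norm_nonneg _) hc
  induction s with
  | zero => simp [hδ]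
  | succ s ih =>
    have key : star a * a ^ (s+1) - a ^ (s+1) * star a
        = (star a * a ^ s - a ^ s * star a) * a + a ^ s * (star a * a - a * star a) := by
      rw [pow_succ]
      noncomm_ring
    rw [key]
    have h1 : ‖(star a * a ^ s - a ^ s * star a) * a‖ ≤ s * δ := by
      calc ‖(star a * a ^ s - a ^ s * star a) * a‖
          ≤ ‖star a * a ^ s - a ^ s * star a‖ * ‖a‖ := norm_mul_le _ _
        _ ≤ (s * δ) * 1 := mul_le_mul ih ha (norm_nonneg _) (by positivity)
        _ = s * δ := mul_one _
    have h2 : ‖a ^ s * (star a * a - a * star a)‖ ≤ δ := by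
      calc ‖a ^ s * (star a * a - a * star a)‖
          ≤ ‖a ^ s‖ * ‖star a * a - a * star a‖ := norm_mul_le _ _
        _ ≤ 1 * δ := mul_le_mul (pow_norm_le_one ha s)
            (by rw [← norm_neg]; simpa [neg_sub] using hc) (norm_nonneg _) zero_le_one
        _ = δ := one_mul _
    calc ‖_ + _‖ ≤ s * δ + δ := le_trans (norm_add_le _ _) (add_le_add h1 h2)
      _ = (s + 1 : ℕ) * δ := by push_cast; ring

lemma starpow_comm_pow (ha : ‖a‖ ≤ 1) (hc : ‖a * star a - star a * a‖ ≤ δ) (l s : ℕ) :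
    ‖star a ^ l * a ^ s - a ^ s * star a ^ l‖ ≤ (l * s) * δ := by
  have hδ : 0 ≤ δ := le_trans (norm_nonneg _) hc
  induction l with
  | zero => simp
  | succ l ih =>
    have key : star a ^ (l+1) * a ^ s - a ^ s * star a ^ (l+1)
        = (star a * a ^ s - a ^ s * star a) * star a ^ l
          + star a * (star a ^ l * a ^ s - a ^ s * star a ^ l) := by
      rw [pow_succ' (star a) l]
      noncomm_ring
    rw [key]
    have hstar : ‖star a‖ ≤ 1 := by rwa [norm_star]
    have h1 : ‖(star a * a ^ s - a ^ s * star a) * star a ^ l‖ ≤ s * δ := by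
      calc ‖(star a * a ^ s - a ^ s * star a) * star a ^ l‖
          ≤ ‖star a * a ^ s - a ^ s * star a‖ * ‖star a ^ l‖ := norm_mul_le _ _
        _ ≤ (s * δ) * 1 := mul_le_mul (star_comm_pow ha hc s)
            (pow_norm_le_one hstar l) (norm_nonneg _) (by positivity)
        _ = s * δ := mul_one _
    have h2 : ‖star a * (star a ^ l * a ^ s - a ^ s * star a ^ l)‖ ≤ (l * s) * δ := by
      calc ‖star a * (star a ^ l * a ^ s - a ^ s * star a ^ l)‖
          ≤ ‖star a‖ * ‖star a ^ l * a ^ s - a ^ s * star a ^ l‖ := norm_mul_le _ _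
        _ ≤ 1 * ((l * s) * δ) := mul_le_mul hstar ih (norm_nonneg _) zero_le_one
        _ = (l * s) * δ := one_mul _
    calc ‖_ + _‖ ≤ s * δ + (l * s) * δ := le_trans (norm_add_le _ _) (add_le_add h1 h2)
      _ = ((l + 1 : ℕ) * s) * δ := by push_cast; ring

lemma mono_merge (ha : ‖a‖ ≤ 1) (hc : ‖a * star a - star a * a‖ ≤ δ) (k l s t : ℕ) :
    ‖a ^ (k + s) * star a ^ (l + t) - a ^ k * star a ^ l * (a ^ s * star a ^ t)‖
      ≤ (l * s) * δ := by
  have key : a ^ (k + s) * star a ^ (l + t) - a ^ k * star a ^ l * (a ^ s * star a ^ t)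
      = a ^ k * (a ^ s * star a ^ l - star a ^ l * a ^ s) * star a ^ t := by
    rw [pow_add, pow_add]
    noncomm_ring
  rw [key]
  have hstar : ‖star a‖ ≤ 1 := by rwa [norm_star]
  calc ‖a ^ k * (a ^ s * star a ^ l - star a ^ l * a ^ s) * star a ^ t‖
      ≤ ‖a ^ k * (a ^ s * star a ^ l - star a ^ l * a ^ s)‖ * ‖star a ^ t‖ := norm_mul_le _ _
    _ ≤ ‖a ^ k‖ * ‖a ^ s * star a ^ l - star a ^ l * a ^ s‖ * ‖star a ^ t‖ := by
        gcongr; exact norm_mul_le _ _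
    _ ≤ 1 * ((l * s) * δ) * 1 := by
        have h3 := starpow_comm_pow ha hc l s
        rw [← norm_neg, neg_sub] at h3
        have hδ : 0 ≤ δ := le_trans (norm_nonneg _) hc
        have := mul_le_mul (mul_le_mul (pow_norm_le_one ha k) h3 (norm_nonneg _) zero_le_one)
          (pow_norm_le_one hstar t) (norm_nonneg _) (by positivity)
        exact this
    _ = (l * s) * δ := by ring

end comms

noncomputable def W0 (p : (ℕ × ℕ) →₀ ℂ) : ℝ := ∑ kl ∈ p.support, ‖p kl‖
noncomputable def W1 (p : (ℕ × ℕ) →₀ ℂ) : ℝ := ∑ kl ∈ p.support, ‖p kl‖ * kl.1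
noncomputable def W2 (p : (ℕ × ℕ) →₀ ℂ) : ℝ := ∑ kl ∈ p.support, ‖p kl‖ * kl.2

lemma W0_nonneg (p : (ℕ × ℕ) →₀ ℂ) : 0 ≤ W0 p :=
  Finset.sum_nonneg fun _ _ => norm_nonneg _
lemma W1_nonneg (p : (ℕ × ℕ) →₀ ℂ) : 0 ≤ W1 p :=
  Finset.sum_nonneg fun _ _ => by positivity
lemma W2_nonneg (p : (ℕ × ℕ) →₀ ℂ) : 0 ≤ W2 p :=
  Finset.sum_nonneg fun _ _ => by positivity

section bounds
variable {A : Type*} [CStarAlgebra A] {a : A} {δ : ℝ}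

lemma norm_polyEvalA_le (ha : ‖a‖ ≤ 1) (p : (ℕ × ℕ) →₀ ℂ) :
    ‖polyEvalA p a‖ ≤ W0 p := by
  rw [polyEvalA_apply]
  refine le_trans (norm_sum_le _ _) (Finset.sum_le_sum fun kl _ => ?_)
  rw [norm_smul]
  calc ‖p kl‖ * ‖a ^ kl.1 * star a ^ kl.2‖ ≤ ‖p kl‖ * (‖a ^ kl.1‖ * ‖star a ^ kl.2‖) := by
        gcongr; exact norm_mul_le _ _
    _ ≤ ‖p kl‖ * (1 * 1) := by
        gcongr
        · exact pow_norm_le_one ha _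
        · exact pow_norm_le_one (by rwa [norm_star]) _
    _ = ‖p kl‖ := by ring

lemma prod_defect (ha : ‖a‖ ≤ 1) (hc : ‖a * star a - star a * a‖ ≤ δ)
    (p q : (ℕ × ℕ) →₀ ℂ) :
    ‖polyEvalA (polyConv p q) a - polyEvalA p a * polyEvalA q a‖ ≤ W2 p * W1 q * δ := by
  have hδ : 0 ≤ δ := le_trans (norm_nonneg _) hc
  rw [polyEvalA_conv, polyEvalA_mul, ← Finset.sum_sub_distrib]
  simp only [← Finset.sum_sub_distrib, ← smul_sub]
  calc ‖∑ kl ∈ p.support, ∑ st ∈ q.support, (p kl * q st) •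
          (a ^ (kl.1 + st.1) * star a ^ (kl.2 + st.2)
            - a ^ kl.1 * star a ^ kl.2 * (a ^ st.1 * star a ^ st.2))‖
      ≤ ∑ kl ∈ p.support, ∑ st ∈ q.support,
          (‖p kl‖ * kl.2) * (‖q st‖ * st.1) * δ := by
        refine le_trans (norm_sum_le _ _) (Finset.sum_le_sum fun kl _ => ?_)
        refine le_trans (norm_sum_le _ _) (Finset.sum_le_sum fun st _ => ?_)
        rw [norm_smul, norm_mul]
        calc ‖p kl‖ * ‖q st‖ * ‖_‖ ≤ ‖p kl‖ * ‖q st‖ * ((kl.2 * st.1) * δ) :=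
              mul_le_mul_of_nonneg_left (mono_merge ha hc kl.1 kl.2 st.1 st.2)
                (by positivity)
          _ = (‖p kl‖ * kl.2) * (‖q st‖ * st.1) * δ := by push_cast; ring
    _ = W2 p * W1 q * δ := by
        rw [W2, W1, Finset.sum_mul_sum, Finset.sum_mul]
        exact Finset.sum_congr rfl fun kl _ => by rw [Finset.sum_mul]

lemma polyConv_comm (p q : (ℕ × ℕ) →₀ ℂ) : polyConv p q = polyConv q p := by
  rw [polyConv_apply, polyConv_apply, Finset.sum_comm]
  refine Finset.sum_congr rfl fun st _ => Finset.sum_congr rfl fun kl _ => ?_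
  rw [add_comm st.1 kl.1, add_comm st.2 kl.2, mul_comm]

lemma comm_defect (ha : ‖a‖ ≤ 1) (hc : ‖a * star a - star a * a‖ ≤ δ)
    (p q : (ℕ × ℕ) →₀ ℂ) :
    ‖polyEvalA p a * polyEvalA q a - polyEvalA q a * polyEvalA p a‖
      ≤ (W2 p * W1 q + W2 q * W1 p) * δ := by
  have key : polyEvalA p a * polyEvalA q a - polyEvalA q a * polyEvalA p a
      = (polyEvalA (polyConv q p) a - polyEvalA q a * polyEvalA p a)
        - (polyEvalA (polyConv p q) a - polyEvalA p a * polyEvalA q a) := by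
    rw [polyConv_comm q p]; abel
  rw [key]
  have h1 := prod_defect ha hc q p
  have h2 := prod_defect ha hc p q
  have := norm_sub_le (polyEvalA (polyConv q p) a - polyEvalA q a * polyEvalA p a)
    (polyEvalA (polyConv p q) a - polyEvalA p a * polyEvalA q a)
  nlinarith [this]

end bounds

section pos
variable {A : Type*} [CStarAlgebra A] [PartialOrder A] [StarOrderedRing A]

lemma algebraMap_nonneg' {t : ℝ} (ht : 0 ≤ t) : 0 ≤ algebraMap ℝ A t := by
  have h : star (Real.sqrt t • (1 : A)) * (Real.sqrt t • (1 : A)) = algebraMap ℝ A t := by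
    rw [star_smul, star_trivial, star_one, smul_mul_smul_comm, one_mul,
      Real.mul_self_sqrt ht, Algebra.algebraMap_eq_smul_one]
  rw [← h]
  exact star_mul_self_nonneg _

end pos

theorem stmt4.{u} (N m : ℕ) (q : (ℕ × ℕ) →₀ ℂ)
    (r : Fin (N + 1) → (ℕ × ℕ) →₀ ℂ) (rr : Fin m → Fin (N + 1) → (ℕ × ℕ) →₀ ℂ)
    (g : Fin m → (ℕ × ℕ) →₀ ℂ)
    (hqreal : IsRealFam q) (hrreal : ∀ j, IsRealFam (r j))
    (hrrreal : ∀ i j, IsRealFam (rr i j)) (hgreal : ∀ i, IsRealFam (g i))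
    (hrep : q = ∑ j, polyConv (r j) (r j)
        + ∑ i, polyConv (∑ j, polyConv (rr i j) (rr i j)) (g i)) :
    ∃ C : ℝ, 0 ≤ C ∧
      ∀ (A : Type u) [CStarAlgebra A] [PartialOrder A] [StarOrderedRing A],
        ∀ δ : ℝ, 0 ≤ δ → ∀ a : A, ‖a‖ ≤ 1 → ‖a * star a - star a * a‖ ≤ δ →
          (∀ i, 0 ≤ polyEvalA (g i) a) →
            ((-(C * δ) : ℝ) : ℂ) • (1 : A) ≤ polyEvalA q a := by
  set S : Fin m → (ℕ × ℕ) →₀ ℂ := fun i => ∑ j, polyConv (rr i j) (rr i j) with hS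
  refine ⟨(∑ j, W2 (r j) * W1 (r j)) + ∑ i, (W2 (S i) * W1 (g i)
      + (∑ j, W2 (rr i j) * W1 (rr i j)) * W0 (g i)
      + ∑ j, W0 (rr i j) * (W2 (rr i j) * W1 (g i) + W2 (g i) * W1 (rr i j))), ?_, ?_⟩
  · have h1 : 0 ≤ ∑ j, W2 (r j) * W1 (r j) :=
      Finset.sum_nonneg fun j _ => mul_nonneg (W2_nonneg _) (W1_nonneg _)
    have h2 : ∀ i : Fin m, (0:ℝ) ≤ W2 (S i) * W1 (g i)
        + (∑ j, W2 (rr i j) * W1 (rr i j)) * W0 (g i)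
        + ∑ j, W0 (rr i j) * (W2 (rr i j) * W1 (g i) + W2 (g i) * W1 (rr i j)) := by
      intro i
      have := W2_nonneg (S i); have := W1_nonneg (g i); have := W0_nonneg (g i)
      have ha : (0:ℝ) ≤ ∑ j, W2 (rr i j) * W1 (rr i j) :=
        Finset.sum_nonneg fun j _ => mul_nonneg (W2_nonneg _) (W1_nonneg _)
      have hb : (0:ℝ) ≤ ∑ j, W0 (rr i j) *
          (W2 (rr i j) * W1 (g i) + W2 (g i) * W1 (rr i j)) :=
        Finset.sum_nonneg fun j _ => mul_nonneg (W0_nonneg _)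
          (add_nonneg (mul_nonneg (W2_nonneg _) (W1_nonneg _))
            (mul_nonneg (W2_nonneg _) (W1_nonneg _)))
      nlinarith
    exact add_nonneg h1 (Finset.sum_nonneg fun i _ => h2 i)
  intro A _ _ _ δ hδ a ha hcomm hg
  set C : ℝ := (∑ j, W2 (r j) * W1 (r j)) + ∑ i, (W2 (S i) * W1 (g i)
      + (∑ j, W2 (rr i j) * W1 (rr i j)) * W0 (g i)
      + ∑ j, W0 (rr i j) * (W2 (rr i j) * W1 (g i) + W2 (g i) * W1 (rr i j))) with hC
  set b : Fin (N + 1) → A := fun j => polyEvalA (r j) a with hbdef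
  set bb : Fin m → Fin (N + 1) → A := fun i j => polyEvalA (rr i j) a with hbbdef
  set G : Fin m → A := fun i => polyEvalA (g i) a with hGdef
  have hb : ∀ j, star (b j) = b j := fun j => isSelfAdjoint_polyEvalA (hrreal j) a
  have hbb : ∀ i j, star (bb i j) = bb i j := fun i j =>
    isSelfAdjoint_polyEvalA (hrrreal i j) a
  set P : A := (∑ j, b j * b j) + ∑ i, ∑ j, bb i j * G i * bb i j with hP
  have hPpos : 0 ≤ P := by
    refine add_nonneg (Finset.sum_nonneg fun j _ => ?_)
      (Finset.sum_nonneg fun i _ => Finset.sum_nonneg fun j _ => ?_)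
    · nth_rewrite 1 [← hb j]; exact star_mul_self_nonneg _
    · nth_rewrite 1 [← hbb i j]; exact star_left_conjugate_nonneg (hg i) _
  -- decomposition of the evaluation of q
  have hqeval : polyEvalA q a = (∑ j, polyEvalA (polyConv (r j) (r j)) a)
      + ∑ i, polyEvalA (polyConv (S i) (g i)) a := by
    rw [hrep, polyEvalA_eq, map_add, map_sum, map_sum]
    rfl
  -- the error term
  set E : A := polyEvalA q a - P with hE
  have hEeq : E = (∑ j, (polyEvalA (polyConv (r j) (r j)) a - b j * b j))
      + ∑ i, (polyEvalA (polyConv (S i) (g i)) a - ∑ j, bb i j * G i * bb i j) := by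
    rw [hE, hqeval, hP, Finset.sum_sub_distrib, Finset.sum_sub_distrib]
    abel
  have hEnorm : ‖E‖ ≤ C * δ := by
    rw [hEeq, hC, add_mul]
    refine le_trans (norm_add_le _ _) (add_le_add ?_ ?_)
    · rw [Finset.sum_mul]
      refine le_trans (norm_sum_le _ _) (Finset.sum_le_sum fun j _ => ?_)
      exact prod_defect ha hcomm (r j) (r j)
    · rw [Finset.sum_mul]
      refine le_trans (norm_sum_le _ _) (Finset.sum_le_sum fun i _ => ?_)
      -- T_i decomposition
      have hTi : polyEvalA (polyConv (S i) (g i)) a - ∑ j, bb i j * G i * bb i j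
          = (polyEvalA (polyConv (S i) (g i)) a - polyEvalA (S i) a * G i)
            + (polyEvalA (S i) a - ∑ j, bb i j * bb i j) * G i
            + ∑ j, bb i j * (bb i j * G i - G i * bb i j) := by
        have : ∑ j, bb i j * (bb i j * G i - G i * bb i j)
            = (∑ j, bb i j * bb i j) * G i - ∑ j, bb i j * G i * bb i j := by
          rw [Finset.sum_mul, ← Finset.sum_sub_distrib]
          exact Finset.sum_congr rfl fun j _ => by noncomm_ring
        rw [this]
        noncomm_ring
      rw [hTi]
      have ht1 : ‖polyEvalA (polyConv (S i) (g i)) a - polyEvalA (S i) a * G i‖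
          ≤ W2 (S i) * W1 (g i) * δ := prod_defect ha hcomm (S i) (g i)
      have ht2 : ‖(polyEvalA (S i) a - ∑ j, bb i j * bb i j) * G i‖
          ≤ (∑ j, W2 (rr i j) * W1 (rr i j)) * W0 (g i) * δ := by
        have hd : ‖polyEvalA (S i) a - ∑ j, bb i j * bb i j‖
            ≤ (∑ j, W2 (rr i j) * W1 (rr i j)) * δ := by
          rw [hS, polyEvalA_sum, ← Finset.sum_sub_distrib, Finset.sum_mul]
          refine le_trans (norm_sum_le _ _) (Finset.sum_le_sum fun j _ => ?_)
          exact prod_defect ha hcomm (rr i j) (rr i j)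
        calc ‖(polyEvalA (S i) a - ∑ j, bb i j * bb i j) * G i‖
            ≤ ‖polyEvalA (S i) a - ∑ j, bb i j * bb i j‖ * ‖G i‖ := norm_mul_le _ _
          _ ≤ ((∑ j, W2 (rr i j) * W1 (rr i j)) * δ) * W0 (g i) := by
              have h0 : (0:ℝ) ≤ (∑ j, W2 (rr i j) * W1 (rr i j)) * δ :=
                mul_nonneg (Finset.sum_nonneg fun j _ =>
                  mul_nonneg (W2_nonneg _) (W1_nonneg _)) hδ
              exact mul_le_mul hd (norm_polyEvalA_le ha (g i)) (norm_nonneg _) h0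
          _ = (∑ j, W2 (rr i j) * W1 (rr i j)) * W0 (g i) * δ := by ring
      have ht3 : ‖∑ j, bb i j * (bb i j * G i - G i * bb i j)‖
          ≤ (∑ j, W0 (rr i j) * (W2 (rr i j) * W1 (g i) + W2 (g i) * W1 (rr i j))) * δ := by
        rw [Finset.sum_mul]
        refine le_trans (norm_sum_le _ _) (Finset.sum_le_sum fun j _ => ?_)
        calc ‖bb i j * (bb i j * G i - G i * bb i j)‖
            ≤ ‖bb i j‖ * ‖bb i j * G i - G i * bb i j‖ := norm_mul_le _ _
          _ ≤ W0 (rr i j) * ((W2 (rr i j) * W1 (g i) + W2 (g i) * W1 (rr i j)) * δ) := by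
              refine mul_le_mul (norm_polyEvalA_le ha (rr i j))
                (comm_defect ha hcomm (rr i j) (g i)) (norm_nonneg _) (W0_nonneg _)
          _ = W0 (rr i j) * (W2 (rr i j) * W1 (g i) + W2 (g i) * W1 (rr i j)) * δ := by
              ring
      refine le_trans (norm_add₃_le)
        (le_trans (add_le_add (add_le_add ht1 ht2) ht3) (le_of_eq (by ring)))
  -- conclude
  have hsaE : IsSelfAdjoint E :=
    (isSelfAdjoint_polyEvalA hqreal a).sub (IsSelfAdjoint.of_nonneg hPpos)
  have h1 : -(algebraMap ℝ A ‖E‖) ≤ E := IsSelfAdjoint.neg_algebraMap_norm_le_self hsaE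
  have h2 : algebraMap ℝ A ‖E‖ ≤ algebraMap ℝ A (C * δ) := by
    rw [← sub_nonneg, ← map_sub]
    exact algebraMap_nonneg' (by linarith)
  have h3 : ((-(C * δ) : ℝ) : ℂ) • (1 : A) = -(algebraMap ℝ A (C * δ)) := by
    rw [show ((-(C * δ) : ℝ) : ℂ) = algebraMap ℝ ℂ (-(C * δ)) from rfl, algebraMap_smul,
      ← Algebra.algebraMap_eq_smul_one, map_neg]
  rw [h3]
  have h4 : E ≤ polyEvalA q a := by
    rw [hE]
    have := le_add_of_nonneg_left (a := polyEvalA q a - P) hPpos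
    calc polyEvalA q a - P ≤ P + (polyEvalA q a - P) := this
      _ = polyEvalA q a := by abel
  calc -(algebraMap ℝ A (C * δ)) ≤ -(algebraMap ℝ A ‖E‖) := neg_le_neg h2
    _ ≤ E := h1
    _ ≤ polyEvalA q a := h4
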